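/- Let H be a real Banach space, let S : [0,∞) → (H →L H) be a strongly continuous contraction semigroup, and let f : H → H be Lipschitz with constant L > 0. Let T > 0 and u0 ∈ H, and let u, v : [0,T] → H be two continuous mild solutions with the same initial datum u0 (i.e. each satisfies w(t) = S(t)u0 + ∫_0^t S(t − s)(f(w(s))) ds for all t ∈ [0,T]). Then u(t) = v(t) for all t ∈ [0,T]. -/

import Mathlib

open MeasureTheory Set Filter Topology

lemma semigroup_joint_cont
    {H : Type*} [NormedAddCommGroup H] [NormedSpace ℝ H]
    (S : ℝ → H →L[ℝ] H)
    (hScontr : ∀ t : ℝ, 0 ≤ t → ‖S t‖ ≤ 1)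
    (hScont : ∀ x : H, ContinuousOn (fun t => S t x) (Set.Ici (0 : ℝ))) :
    ContinuousOn (fun p : ℝ × H => S p.1 p.2) (Set.Ici (0 : ℝ) ×ˢ (Set.univ : Set H)) := by
  rintro ⟨t₀, x₀⟩ ⟨ht₀, -⟩
  have h1 : Tendsto (fun p : ℝ × H => S p.1 x₀) (𝓝[Set.Ici (0:ℝ) ×ˢ (Set.univ : Set H)] (t₀, x₀))
      (𝓝 (S t₀ x₀)) :=
    ContinuousWithinAt.comp (g := fun t => S t x₀) (f := Prod.fst) (x := (t₀, x₀))
      (s := Set.Ici (0:ℝ) ×ˢ (Set.univ : Set H)) (t := Set.Ici (0:ℝ))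
      (hScont x₀ t₀ ht₀) continuousWithinAt_fst (fun p hp => hp.1)
  have h2 : Tendsto (fun p : ℝ × H => S p.1 (p.2 - x₀))
      (𝓝[Set.Ici (0:ℝ) ×ˢ (Set.univ : Set H)] (t₀, x₀)) (𝓝 0) := by
    apply squeeze_zero_norm'
    · filter_upwards [self_mem_nhdsWithin] with p hp
      calc ‖S p.1 (p.2 - x₀)‖ ≤ ‖S p.1‖ * ‖p.2 - x₀‖ := (S p.1).le_opNorm _
        _ ≤ 1 * ‖p.2 - x₀‖ :=
            mul_le_mul_of_nonneg_right (hScontr _ hp.1) (norm_nonneg _)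
        _ = ‖p.2 - x₀‖ := one_mul _
    · have : Tendsto (fun p : ℝ × H => ‖p.2 - x₀‖) (𝓝 (t₀, x₀)) (𝓝 ‖x₀ - x₀‖) :=
        ((continuous_snd.sub continuous_const).norm).tendsto _
      simpa using this.mono_left nhdsWithin_le_nhds
  have h3 := h1.add h2
  have heq : (fun p : ℝ × H => S p.1 x₀ + S p.1 (p.2 - x₀)) = fun p : ℝ × H => S p.1 p.2 := by
    funext p
    rw [← map_add, add_sub_cancel]
  rw [heq] at h3
  simpa [ContinuousWithinAt] using h3

/-- **Global uniqueness of mild solutions.**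
If `S` is a strongly continuous contraction semigroup, `f` is `L`-Lipschitz, and
`u, v` are continuous mild solutions on `[0,T]` with the same initial datum `u0`,
then `u = v` on `[0,T]`. -/
theorem mild_solution_unique
    {H : Type*} [NormedAddCommGroup H] [NormedSpace ℝ H] [CompleteSpace H]
    (S : ℝ → H →L[ℝ] H)
    (hS0 : S 0 = ContinuousLinearMap.id ℝ H)
    (hSadd : ∀ t s : ℝ, 0 ≤ t → 0 ≤ s → S (t + s) = (S t).comp (S s))
    (hScontr : ∀ t : ℝ, 0 ≤ t → ‖S t‖ ≤ 1)
    (hScont : ∀ x : H, ContinuousOn (fun t => S t x) (Set.Ici (0 : ℝ)))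
    (f : H → H) (L : ℝ) (hL : 0 < L)
    (hf : ∀ a b : H, ‖f a - f b‖ ≤ L * ‖a - b‖)
    (T : ℝ) (hT : 0 < T) (u0 : H) (u v : ℝ → H)
    (hu_cont : ContinuousOn u (Set.Icc 0 T))
    (hv_cont : ContinuousOn v (Set.Icc 0 T))
    (hu_mild : ∀ t ∈ Set.Icc (0 : ℝ) T,
      u t = S t u0 + ∫ s in (0 : ℝ)..t, S (t - s) (f (u s)))
    (hv_mild : ∀ t ∈ Set.Icc (0 : ℝ) T,
      v t = S t u0 + ∫ s in (0 : ℝ)..t, S (t - s) (f (v s))) :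
    ∀ t ∈ Set.Icc (0 : ℝ) T, u t = v t := by
  have hjoint := semigroup_joint_cont S hScontr hScont
  have hf_cont : Continuous f := by
    have : LipschitzWith (Real.toNNReal L) f := by
      apply LipschitzWith.of_dist_le_mul
      intro a b
      rw [dist_eq_norm, dist_eq_norm, Real.coe_toNNReal _ hL.le]
      exact hf a b
    exact this.continuous
  set g : ℝ → ℝ := fun s => ‖u s - v s‖ with hg_def
  have hg_cont : ContinuousOn g (Set.Icc 0 T) := (hu_cont.sub hv_cont).norm
  have hg_nonneg : ∀ s, 0 ≤ g s := fun s => norm_nonneg _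
  set F : ℝ → ℝ := fun t => ∫ s in (0:ℝ)..t, g s with hF_def
  -- continuity of integrands
  have hint : ∀ (w : ℝ → H), ContinuousOn w (Set.Icc 0 T) → ∀ t ∈ Set.Icc (0:ℝ) T,
      ContinuousOn (fun s => S (t - s) (f (w s))) (Set.Icc 0 t) := by
    intro w hw t ht
    have hcp : ContinuousOn (fun s : ℝ => ((t - s, f (w s)) : ℝ × H)) (Set.Icc 0 t) := by
      apply ContinuousOn.prodMk
      · exact (continuous_const.sub continuous_id).continuousOn
      · exact hf_cont.comp_continuousOn (hw.mono (Set.Icc_subset_Icc le_rfl ht.2))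
    exact hjoint.comp hcp (fun s hs => ⟨sub_nonneg.2 hs.2, Set.mem_univ _⟩)
  -- main integral inequality
  have key : ∀ t ∈ Set.Icc (0:ℝ) T, g t ≤ L * F t := by
    intro t ht
    have h0t : (0:ℝ) ≤ t := ht.1
    have hIu : IntervalIntegrable (fun s => S (t - s) (f (u s))) volume 0 t :=
      ContinuousOn.intervalIntegrable (by rw [Set.uIcc_of_le h0t]; exact hint u hu_cont t ht)
    have hIv : IntervalIntegrable (fun s => S (t - s) (f (v s))) volume 0 t :=
      ContinuousOn.intervalIntegrable (by rw [Set.uIcc_of_le h0t]; exact hint v hv_cont t ht)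
    have hIsub : IntervalIntegrable (fun s => S (t - s) (f (u s) - f (v s))) volume 0 t := by
      have := hIu.sub hIv
      simpa [map_sub] using this
    have hsub : u t - v t = ∫ s in (0:ℝ)..t, S (t - s) (f (u s) - f (v s)) := by
      rw [hu_mild t ht, hv_mild t ht, add_sub_add_left_eq_sub,
        ← intervalIntegral.integral_sub hIu hIv]
      simp [map_sub]
    have hbound : ∀ s ∈ Set.Icc (0:ℝ) t, ‖S (t - s) (f (u s) - f (v s))‖ ≤ L * g s := by
      intro s hs
      calc ‖S (t - s) (f (u s) - f (v s))‖ ≤ ‖S (t - s)‖ * ‖f (u s) - f (v s)‖ :=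
            (S (t - s)).le_opNorm _
        _ ≤ 1 * (L * ‖u s - v s‖) :=
            mul_le_mul (hScontr _ (sub_nonneg.2 hs.2)) (hf _ _) (norm_nonneg _) zero_le_one
        _ = L * g s := one_mul _
    have hgLg : IntervalIntegrable (fun s => L * g s) volume 0 t :=
      ContinuousOn.intervalIntegrable (by
        rw [Set.uIcc_of_le h0t]
        exact continuousOn_const.mul (hg_cont.mono (Set.Icc_subset_Icc le_rfl ht.2)))
    calc g t = ‖∫ s in (0:ℝ)..t, S (t - s) (f (u s) - f (v s))‖ := by show ‖u t - v t‖ = _; rw [hsub]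
      _ ≤ ∫ s in (0:ℝ)..t, ‖S (t - s) (f (u s) - f (v s))‖ :=
          intervalIntegral.norm_integral_le_integral_norm h0t
      _ ≤ ∫ s in (0:ℝ)..t, L * g s :=
          intervalIntegral.integral_mono_on h0t hIsub.norm hgLg hbound
      _ = L * F t := by rw [hF_def]; exact intervalIntegral.integral_const_mul _ _
  -- Grönwall
  have hF_cont : ContinuousOn F (Set.Icc 0 T) := by
    have := intervalIntegral.continuousOn_primitive_interval (μ := volume) (a := 0) (b := T)
      (f := g) (by rw [Set.uIcc_of_le hT.le]; exact hg_cont.integrableOn_Icc)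
    rwa [Set.uIcc_of_le hT.le] at this
  have hF_nonneg : ∀ t ∈ Set.Icc (0:ℝ) T, 0 ≤ F t := fun t ht =>
    intervalIntegral.integral_nonneg ht.1 (fun s _ => hg_nonneg s)
  have hF_deriv : ∀ x ∈ Set.Ico (0:ℝ) T, HasDerivWithinAt F (g x) (Set.Ici x) x := by
    intro x hx
    have hmem : Set.Icc (0:ℝ) T ∈ 𝓝[Set.Ici x] x := by
      have hIic : Set.Iic T ∈ 𝓝 x := Iic_mem_nhds hx.2
      filter_upwards [self_mem_nhdsWithin, mem_nhdsWithin_of_mem_nhds hIic] with y hy1 hy2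
      exact ⟨le_trans hx.1 hy1, hy2⟩
    have hintg : IntervalIntegrable g volume 0 x :=
      ContinuousOn.intervalIntegrable (by
        rw [Set.uIcc_of_le hx.1]
        exact hg_cont.mono (Set.Icc_subset_Icc le_rfl hx.2.le))
    have hmem' : Set.Icc (0:ℝ) T ∈ 𝓝[Set.Ioi x] x :=
      nhdsWithin_mono x Set.Ioi_subset_Ici_self hmem
    have hmeas : StronglyMeasurableAtFilter g (𝓝[Set.Ioi x] x) :=
      ⟨Set.Icc 0 T, hmem', hg_cont.aestronglyMeasurable measurableSet_Icc⟩
    have hcw : ContinuousWithinAt g (Set.Ioi x) x :=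
      (hg_cont x ⟨hx.1, hx.2.le⟩).mono_of_mem_nhdsWithin hmem'
    exact intervalIntegral.integral_hasDerivWithinAt_right hintg hmeas hcw
  have hgr := norm_le_gronwallBound_of_norm_deriv_right_le (f := F) (f' := g)
    (δ := 0) (K := L) (ε := 0) (a := 0) (b := T) hF_cont hF_deriv
    (by simp [hF_def])
    (fun x hx => by
      rw [Real.norm_of_nonneg (hg_nonneg x), Real.norm_of_nonneg (hF_nonneg x ⟨hx.1, hx.2.le⟩)]
      simpa using key x ⟨hx.1, hx.2.le⟩)
  intro t ht
  have hF0 : F t = 0 := by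
    have := hgr t ht
    rw [gronwallBound_ε0_δ0] at this
    exact norm_eq_zero.1 (le_antisymm this (norm_nonneg _))
  have hgt : g t = 0 := by
    have h1 := key t ht
    rw [hF0, mul_zero] at h1
    exact le_antisymm h1 (hg_nonneg t)
  exact sub_eq_zero.1 (norm_eq_zero.1 hgt)
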